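/- Let E be a Banach lattice that is an AM-space with unit e, i.e. e ≥ 0 and for every x ∈ E one has ‖x‖ ≤ 1 if and only if |x| ≤ e, and let F be a Dedekind complete Banach lattice. Let P : E → F be a positive continuous n-homogeneous polynomial with associated symmetric n-linear map T_P. Then ‖T_P‖ = ‖P‖ and ‖P(e)‖ = ‖P‖; in particular P attains its norm at e. -/

import Mathlib

open Filter Topology

variable {n : ℕ} {E : Type*} [NormedAddCommGroup E] [Lattice E] [IsOrderedAddMonoid E]
  [HasSolidNorm E] [NormedSpace ℝ E] [PosSMulStrictMono ℝ E]
  {F : Type*} [NormedAddCommGroup F] [Lattice F] [IsOrderedAddMonoid F]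
  [HasSolidNorm F] [NormedSpace ℝ F] [PosSMulStrictMono ℝ F]

/-- A continuous `n`-linear map on `Eⁿ` is symmetric; a continuous `n`-homogeneous polynomial
is (identified with) a symmetric continuous `n`-linear map `T_P`, via `P x = T_P (x, …, x)`. -/
def IsSymmML (T : ContinuousMultilinearMap ℝ (fun _ : Fin n => E) F) : Prop :=
  ∀ (σ : Equiv.Perm (Fin n)) (x : Fin n → E), T (x ∘ σ) = T x

/-- The norm of the `n`-homogeneous polynomial associated to `T`:
`‖P‖ = sup {‖T (x, …, x)‖ : ‖x‖ ≤ 1}`. -/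
noncomputable def polyNorm (T : ContinuousMultilinearMap ℝ (fun _ : Fin n => E) F) : ℝ :=
  sSup ((fun x => ‖T (fun _ => x)‖) '' Metric.closedBall (0 : E) 1)

/-- A positive multilinear map is monotone on nonnegative tuples. -/
lemma posML_mono (T : ContinuousMultilinearMap ℝ (fun _ : Fin n => E) F)
    (hpos : ∀ x : Fin n → E, (∀ i, 0 ≤ x i) → 0 ≤ T x)
    (a b : Fin n → E) (ha : ∀ i, 0 ≤ a i) (hab : ∀ i, a i ≤ b i) : T a ≤ T b := by
  classical
  have hb : ∀ i, 0 ≤ b i := fun i => (ha i).trans (hab i)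
  have key : ∀ s : Finset (Fin n), T a ≤ T (s.piecewise b a) := by
    intro s
    induction s using Finset.induction with
    | empty => simp
    | @insert j s hj ih =>
      refine ih.trans ?_
      have h1 : (insert j s).piecewise b a = Function.update (s.piecewise b a) j (b j) :=
        s.piecewise_insert b a j
      have h2 : s.piecewise b a = Function.update (s.piecewise b a) j (a j) := by
        rw [show a j = s.piecewise b a j from (Finset.piecewise_eq_of_notMem _ _ _ hj).symm,
          Function.update_eq_self]
      have hsub : T (Function.update (s.piecewise b a) j (b j))
          - T (Function.update (s.piecewise b a) j (a j))
          = T (Function.update (s.piecewise b a) j (b j - a j)) :=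
        (T.map_update_sub _ j _ _).symm
      have hnn : 0 ≤ T (Function.update (s.piecewise b a) j (b j - a j)) := by
        refine hpos _ fun i => ?_
        rcases eq_or_ne i j with rfl | hij
        · simp [sub_nonneg.mpr (hab i)]
        · rw [Function.update_of_ne hij]
          by_cases hi : i ∈ s
          · simpa [Finset.piecewise_eq_of_mem _ _ _ hi] using hb i
          · simpa [Finset.piecewise_eq_of_notMem _ _ _ hi] using ha i
      rw [h1]
      nth_rewrite 1 [h2]
      exact sub_nonneg.mp (by rw [hsub]; exact hnn)
  simpa using key Finset.univ

/-- `|T x| ≤ T |x|` for a positive multilinear map. -/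
lemma posML_abs_le (T : ContinuousMultilinearMap ℝ (fun _ : Fin n => E) F)
    (hpos : ∀ x : Fin n → E, (∀ i, 0 ≤ x i) → 0 ≤ T x)
    (x : Fin n → E) : |T x| ≤ T (fun i => |x i|) := by
  classical
  set m : Fin n → E := fun i => (x i)⁺ with hm
  set m' : Fin n → E := fun i => (x i)⁻ with hm'
  have hxeq : x = fun i => m i + (-1 : ℝ) • m' i := by
    funext i
    show x i = (x i)⁺ + (-1 : ℝ) • (x i)⁻
    rw [neg_one_smul, ← sub_eq_add_neg, posPart_sub_negPart]
  have habs : (fun i => |x i|) = fun i => m i + m' i := by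
    funext i; simp [m, m', posPart_add_negPart]
  have hsum1 : T x = ∑ s : Finset (Fin n), T (s.piecewise m (fun i => (-1 : ℝ) • m' i)) := by
    rw [hxeq]
    exact T.toMultilinearMap.map_add_univ m (fun i => (-1 : ℝ) • m' i)
  have hsum2 : T (fun i => |x i|) = ∑ s : Finset (Fin n), T (s.piecewise m m') := by
    rw [habs]
    exact T.toMultilinearMap.map_add_univ m m'
  have hterm : ∀ s : Finset (Fin n),
      T (s.piecewise m (fun i => (-1 : ℝ) • m' i))
        = (∏ i : Fin n, (if i ∈ s then (1 : ℝ) else -1)) • T (s.piecewise m m') := by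
    intro s
    have hpw : s.piecewise m (fun i => (-1 : ℝ) • m' i)
        = fun i => (if i ∈ s then (1 : ℝ) else -1) • (s.piecewise m m') i := by
      funext i
      by_cases hi : i ∈ s
      · simp [Finset.piecewise_eq_of_mem _ _ _ hi, hi]
      · simp [Finset.piecewise_eq_of_notMem _ _ _ hi, hi]
    rw [hpw]
    exact T.toMultilinearMap.map_smul_univ _ _
  have hTnn : ∀ s : Finset (Fin n), 0 ≤ T (s.piecewise m m') := by
    intro s
    refine hpos _ fun i => ?_
    by_cases hi : i ∈ s
    · simpa [m, Finset.piecewise_eq_of_mem _ _ _ hi] using posPart_nonneg (x i)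
    · simpa [m', Finset.piecewise_eq_of_notMem _ _ _ hi] using negPart_nonneg (x i)
  have heps : ∀ s : Finset (Fin n),
      |∏ i : Fin n, (if i ∈ s then (1 : ℝ) else -1)| = 1 := by
    intro s
    rw [Finset.abs_prod]
    refine Finset.prod_eq_one fun i _ => ?_
    by_cases hi : i ∈ s <;> simp [hi]
  rw [abs_le']
  constructor
  · rw [hsum1, hsum2]
    refine Finset.sum_le_sum fun s _ => ?_
    rw [hterm s]
    have h1 : (∏ i : Fin n, (if i ∈ s then (1 : ℝ) else -1)) ≤ 1 :=
      (le_abs_self _).trans_eq (heps s)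
    calc (∏ i : Fin n, (if i ∈ s then (1 : ℝ) else -1)) • T (s.piecewise m m')
        ≤ (1 : ℝ) • T (s.piecewise m m') := smul_le_smul_of_nonneg_right h1 (hTnn s)
      _ = T (s.piecewise m m') := one_smul _ _
  · rw [hsum1, hsum2, ← Finset.sum_neg_distrib]
    refine Finset.sum_le_sum fun s _ => ?_
    rw [hterm s]
    have h1 : (-1 : ℝ) ≤ ∏ i : Fin n, (if i ∈ s then (1 : ℝ) else -1) :=
      neg_abs_le _ |>.trans_eq' (by rw [heps s])
    calc -((∏ i : Fin n, (if i ∈ s then (1 : ℝ) else -1)) • T (s.piecewise m m'))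
        = (-(∏ i : Fin n, (if i ∈ s then (1 : ℝ) else -1))) • T (s.piecewise m m') :=
          (neg_smul _ _).symm
      _ ≤ (1 : ℝ) • T (s.piecewise m m') :=
          smul_le_smul_of_nonneg_right (neg_le.mp (by simpa using h1)) (hTnn s)
      _ = T (s.piecewise m m') := one_smul _ _

/-- Example 3.17(3): if `E` is an AM-space with unit `e` and `F` is a Dedekind complete Banach
lattice, then every positive continuous `n`-homogeneous polynomial `P` on `E` satisfies
`‖T_P‖ = ‖P‖` and `‖P(e)‖ = ‖P‖`; in particular `P` attains its norm at `e`. -/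
theorem stmt14 [CompleteSpace E] [CompleteSpace F]
    -- `E` is an AM-space with unit `e`
    (e : E) (he : 0 ≤ e) (ham : ∀ x : E, ‖x‖ ≤ 1 ↔ |x| ≤ e)
    -- `F` is Dedekind complete
    (hDed : ∀ S : Set F, S.Nonempty → BddAbove S → ∃ s, IsLUB S s)
    -- `P` a positive continuous `n`-homogeneous polynomial with associated symmetric map `T`
    (T : ContinuousMultilinearMap ℝ (fun _ : Fin n => E) F)
    (hsymm : IsSymmML T)
    (hpos : ∀ x : Fin n → E, (∀ i, 0 ≤ x i) → 0 ≤ T x) :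
    ‖T‖ = polyNorm T ∧ ‖T (fun _ => e)‖ = polyNorm T ∧ ‖e‖ ≤ 1 := by
  classical
  have he1 : ‖e‖ ≤ 1 := (ham e).mpr (abs_of_nonneg he).le
  set b : F := T (fun _ => e) with hb
  have hbnn : 0 ≤ b := hpos _ fun _ => he
  -- key pointwise bound
  have hkey : ∀ x : Fin n → E, (∀ i, ‖x i‖ ≤ 1) → ‖T x‖ ≤ ‖b‖ := by
    intro x hx
    have h1 : |T x| ≤ T (fun i => |x i|) := posML_abs_le T hpos x
    have h2 : T (fun i => |x i|) ≤ b :=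
      posML_mono T hpos _ _ (fun i => abs_nonneg _) (fun i => (ham (x i)).mp (hx i))
    refine norm_le_norm_of_abs_le_abs ?_
    rw [abs_of_nonneg hbnn]
    exact h1.trans h2
  -- polyNorm ≤ ‖T‖
  have hA : polyNorm T ≤ ‖T‖ := by
    refine Real.sSup_le ?_ (norm_nonneg T)
    rintro y ⟨x, hx, rfl⟩
    have hx1 : ‖x‖ ≤ 1 := mem_closedBall_zero_iff.mp hx
    calc ‖T (fun _ => x)‖ ≤ ‖T‖ * ∏ _i : Fin n, ‖x‖ := T.le_opNorm _
      _ ≤ ‖T‖ * 1 := by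
          refine mul_le_mul_of_nonneg_left ?_ (norm_nonneg T)
          exact Finset.prod_le_one (fun _ _ => norm_nonneg x) (fun _ _ => hx1)
      _ = ‖T‖ := mul_one _
  -- ‖b‖ ≤ polyNorm
  have hB : ‖b‖ ≤ polyNorm T := by
    refine le_csSup ⟨‖b‖, ?_⟩ ⟨e, mem_closedBall_zero_iff.mpr he1, rfl⟩
    rintro y ⟨x, hx, rfl⟩
    exact hkey _ fun _ => mem_closedBall_zero_iff.mp hx
  -- ‖T‖ ≤ ‖b‖
  have hC : ‖T‖ ≤ ‖b‖ := by
    refine T.opNorm_le_bound (norm_nonneg b) fun x => ?_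
    by_cases hz : ∃ i, x i = 0
    · obtain ⟨i, hi⟩ := hz
      rw [T.map_coord_zero i hi, norm_zero]
      exact mul_nonneg (norm_nonneg b) (Finset.prod_nonneg fun _ _ => norm_nonneg _)
    · push_neg at hz
      set u : Fin n → E := fun i => (‖x i‖)⁻¹ • x i with hu
      have hun : ∀ i, ‖u i‖ ≤ 1 := by
        intro i
        rw [hu, norm_smul, norm_inv, norm_norm, inv_mul_cancel₀ (norm_ne_zero_iff.mpr (hz i))]
      have hxu : x = fun i => ‖x i‖ • u i := by
        funext i
        rw [hu, smul_inv_smul₀ (norm_ne_zero_iff.mpr (hz i))]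
      have : T x = (∏ i : Fin n, ‖x i‖) • T u := by
        conv_lhs => rw [hxu]
        exact T.toMultilinearMap.map_smul_univ _ _
      rw [this, norm_smul, Real.norm_eq_abs,
        abs_of_nonneg (Finset.prod_nonneg fun _ _ => norm_nonneg _), mul_comm]
      exact mul_le_mul_of_nonneg_right (hkey u hun) (Finset.prod_nonneg fun _ _ => norm_nonneg _)
  exact ⟨le_antisymm (hC.trans hB) hA, le_antisymm hB (hA.trans hC), he1⟩
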